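/- (Lemma 2: W₀χ = W₀.) If χ ∈ W₀ and χ(z) is an invertible matrix for every z ∈ ℂ ∖ Λ, then the set of pointwise products { z ↦ X(z) · χ(z) : X ∈ W₀ } (as functions on ℂ ∖ Λ) is equal to W₀ (restricted to ℂ ∖ Λ). -/

import Mathlib

noncomputable section

open Filter Topology

attribute [local instance] Matrix.normedAddCommGroup Matrix.normedSpace

/-- The Pauli matrix σ₁. -/
def σ1 : Matrix (Fin 2) (Fin 2) ℂ := !![0, 1; 1, 0]

/-- The Pauli matrix σ₂. -/
def σ2 : Matrix (Fin 2) (Fin 2) ℂ := !![0, -Complex.I; Complex.I, 0]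

/-- The Pauli matrix σ₃. -/
def σ3 : Matrix (Fin 2) (Fin 2) ℂ := !![1, 0; 0, -1]

/-- The period lattice Λ = 2ω₁ℤ + 2ω₃ℤ. -/
def lattice (ω₁ ω₃ : ℂ) : Set ℂ :=
  {z | ∃ m n : ℤ, z = 2 * (m : ℂ) * ω₁ + 2 * (n : ℂ) * ω₃}

/-- Twisted double periodicity on a set `S`: `X (z + 2ω_a) = σ_a * X z * σ_a` for `a = 1,2,3`,
with `ω₂ = -ω₁ - ω₃`. -/
def TwistedPeriodicOn (ω₁ ω₃ : ℂ) (S : Set ℂ)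
    (X : ℂ → Matrix (Fin 2) (Fin 2) ℂ) : Prop :=
  (∀ z ∈ S, X (z + 2 * ω₁) = σ1 * X z * σ1) ∧
  (∀ z ∈ S, X (z + 2 * (-ω₁ - ω₃)) = σ2 * X z * σ2) ∧
  (∀ z ∈ S, X (z + 2 * ω₃) = σ3 * X z * σ3)

/-- The vacuum point `W₀`: functions holomorphic on `ℂ ∖ Λ` and twisted doubly periodic there. -/
def W0 (ω₁ ω₃ : ℂ) : Set (ℂ → Matrix (Fin 2) (Fin 2) ℂ) :=
  {X | DifferentiableOn ℂ X (lattice ω₁ ω₃)ᶜ ∧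
       TwistedPeriodicOn ω₁ ω₃ (lattice ω₁ ω₃)ᶜ X}

lemma σ1_mul_σ1 : σ1 * σ1 = 1 := by
  ext i j; fin_cases i <;> fin_cases j <;>
    simp [σ1, Matrix.mul_apply, Fin.sum_univ_two]

lemma σ2_mul_σ2 : σ2 * σ2 = 1 := by
  ext i j; fin_cases i <;> fin_cases j <;>
    simp [σ2, Matrix.mul_apply, Fin.sum_univ_two, Complex.I_mul_I]

lemma σ3_mul_σ3 : σ3 * σ3 = 1 := by
  ext i j; fin_cases i <;> fin_cases j <;>
    simp [σ3, Matrix.mul_apply, Fin.sum_univ_two]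

lemma σ1_inv : σ1⁻¹ = σ1 := Matrix.inv_eq_right_inv σ1_mul_σ1
lemma σ2_inv : σ2⁻¹ = σ2 := Matrix.inv_eq_right_inv σ2_mul_σ2
lemma σ3_inv : σ3⁻¹ = σ3 := Matrix.inv_eq_right_inv σ3_mul_σ3

section Diff

variable {S : Set ℂ} {f g : ℂ → Matrix (Fin 2) (Fin 2) ℂ}

lemma entry_diffOn (hf : DifferentiableOn ℂ f S) (i j : Fin 2) :
    DifferentiableOn ℂ (fun z => f z i j) S := by
  have h1 := (differentiableOn_pi (𝕜 := ℂ) (Φ := f)).1 hf i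
  exact (differentiableOn_pi (𝕜 := ℂ) (Φ := fun z => f z i)).1 h1 j

lemma matrix_diffOn (h : ∀ i j : Fin 2, DifferentiableOn ℂ (fun z => f z i j) S) :
    DifferentiableOn ℂ f S := by
  refine (differentiableOn_pi (𝕜 := ℂ) (Φ := f)).2 fun i => ?_
  exact (differentiableOn_pi (𝕜 := ℂ) (Φ := fun z => f z i)).2 fun j => h i j

lemma mul_diffOn (hf : DifferentiableOn ℂ f S) (hg : DifferentiableOn ℂ g S) :
    DifferentiableOn ℂ (fun z => f z * g z) S := by
  refine matrix_diffOn fun i j => ?_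
  have : (fun z => (f z * g z) i j)
      = fun z => f z i 0 * g z 0 j + f z i 1 * g z 1 j := by
    funext z; simp [Matrix.mul_apply, Fin.sum_univ_two]
  rw [this]
  exact ((entry_diffOn hf i 0).mul (entry_diffOn hg 0 j)).add
    ((entry_diffOn hf i 1).mul (entry_diffOn hg 1 j))

lemma inv_diffOn (hf : DifferentiableOn ℂ f S)
    (hinv : ∀ z ∈ S, IsUnit (f z)) :
    DifferentiableOn ℂ (fun z => (f z)⁻¹) S := by
  have hdet : DifferentiableOn ℂ (fun z => (f z).det) S := by
    have : (fun z => (f z).det)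
        = fun z => f z 0 0 * f z 1 1 - f z 0 1 * f z 1 0 := by
      funext z; rw [Matrix.det_fin_two]
    rw [this]
    exact ((entry_diffOn hf 0 0).mul (entry_diffOn hf 1 1)).sub
      ((entry_diffOn hf 0 1).mul (entry_diffOn hf 1 0))
  have hdetne : ∀ z ∈ S, (f z).det ≠ 0 := fun z hz =>
    ((Matrix.isUnit_iff_isUnit_det _).1 (hinv z hz)).ne_zero
  have hdetinv : DifferentiableOn ℂ (fun z => ((f z).det)⁻¹) S := hdet.inv hdetne
  have hform : (fun z => (f z)⁻¹)
      = fun z => ((f z).det)⁻¹ • (f z).adjugate := by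
    funext z; rw [Matrix.inv_def, Ring.inverse_eq_inv']
  rw [hform]
  refine matrix_diffOn fun i j => ?_
  have : (fun z => (((f z).det)⁻¹ • (f z).adjugate) i j)
      = fun z => ((f z).det)⁻¹ * (f z).adjugate i j := by
    funext z; simp
  rw [this]
  have hadj : DifferentiableOn ℂ (fun z => (f z).adjugate i j) S := by
    have h00 := entry_diffOn hf 0 0
    have h01 := entry_diffOn hf 0 1
    have h10 := entry_diffOn hf 1 0
    have h11 := entry_diffOn hf 1 1
    fin_cases i <;> fin_cases j <;>
      simp only [Matrix.adjugate_fin_two] <;>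
      first
        | simpa using h11
        | simpa using h01.neg
        | simpa using h10.neg
        | simpa using h00
  exact hdetinv.mul hadj

end Diff

lemma twist_mul {ω₁ ω₃ : ℂ} {S : Set ℂ} {f g : ℂ → Matrix (Fin 2) (Fin 2) ℂ}
    (hf : TwistedPeriodicOn ω₁ ω₃ S f) (hg : TwistedPeriodicOn ω₁ ω₃ S g) :
    TwistedPeriodicOn ω₁ ω₃ S (fun z => f z * g z) := by
  obtain ⟨hf1, hf2, hf3⟩ := hf
  obtain ⟨hg1, hg2, hg3⟩ := hg
  refine ⟨fun z hz => ?_, fun z hz => ?_, fun z hz => ?_⟩ <;> dsimp only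
  · rw [hf1 z hz, hg1 z hz]
    calc σ1 * f z * σ1 * (σ1 * g z * σ1)
        = σ1 * f z * (σ1 * σ1) * g z * σ1 := by noncomm_ring
      _ = σ1 * (f z * g z) * σ1 := by rw [σ1_mul_σ1]; noncomm_ring
  · rw [hf2 z hz, hg2 z hz]
    calc σ2 * f z * σ2 * (σ2 * g z * σ2)
        = σ2 * f z * (σ2 * σ2) * g z * σ2 := by noncomm_ring
      _ = σ2 * (f z * g z) * σ2 := by rw [σ2_mul_σ2]; noncomm_ring
  · rw [hf3 z hz, hg3 z hz]
    calc σ3 * f z * σ3 * (σ3 * g z * σ3)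
        = σ3 * f z * (σ3 * σ3) * g z * σ3 := by noncomm_ring
      _ = σ3 * (f z * g z) * σ3 := by rw [σ3_mul_σ3]; noncomm_ring

lemma twist_inv {ω₁ ω₃ : ℂ} {S : Set ℂ} {f : ℂ → Matrix (Fin 2) (Fin 2) ℂ}
    (hf : TwistedPeriodicOn ω₁ ω₃ S f) :
    TwistedPeriodicOn ω₁ ω₃ S (fun z => (f z)⁻¹) := by
  obtain ⟨hf1, hf2, hf3⟩ := hf
  refine ⟨fun z hz => ?_, fun z hz => ?_, fun z hz => ?_⟩ <;> dsimp only
  · rw [hf1 z hz, Matrix.mul_inv_rev, Matrix.mul_inv_rev, σ1_inv, Matrix.mul_assoc]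
  · rw [hf2 z hz, Matrix.mul_inv_rev, Matrix.mul_inv_rev, σ2_inv, Matrix.mul_assoc]
  · rw [hf3 z hz, Matrix.mul_inv_rev, Matrix.mul_inv_rev, σ3_inv, Matrix.mul_assoc]

/-- Lemma 2: `W₀ χ = W₀` for `χ ∈ W0` pointwise invertible on `ℂ ∖ Λ`,
as sets of functions on `ℂ ∖ Λ`. -/
theorem W0_mul_chi_eq_W0 (ω₁ ω₃ : ℂ)
    (hind : LinearIndependent ℝ ![ω₁, ω₃])
    (χ : ℂ → Matrix (Fin 2) (Fin 2) ℂ) (hχ : χ ∈ W0 ω₁ ω₃)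
    (hinv : ∀ z ∈ (lattice ω₁ ω₃)ᶜ, IsUnit (χ z)) :
    (fun X : ℂ → Matrix (Fin 2) (Fin 2) ℂ =>
        ((lattice ω₁ ω₃)ᶜ).restrict (fun z => X z * χ z)) '' W0 ω₁ ω₃
      = ((lattice ω₁ ω₃)ᶜ).restrict '' W0 ω₁ ω₃ := by
  obtain ⟨hχd, hχp⟩ := hχ
  have hχinvd : DifferentiableOn ℂ (fun z => (χ z)⁻¹) (lattice ω₁ ω₃)ᶜ :=
    inv_diffOn hχd hinv
  ext g
  constructor
  · rintro ⟨X, hX, rfl⟩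
    exact ⟨fun z => X z * χ z, ⟨mul_diffOn hX.1 hχd, twist_mul hX.2 hχp⟩, rfl⟩
  · rintro ⟨Y, hY, rfl⟩
    refine ⟨fun z => Y z * (χ z)⁻¹, ⟨mul_diffOn hY.1 hχinvd, twist_mul hY.2 (twist_inv hχp)⟩, ?_⟩
    funext z
    show Y (z : ℂ) * (χ (z : ℂ))⁻¹ * χ (z : ℂ) = Y z
    rw [Matrix.mul_assoc,
      Matrix.nonsing_inv_mul _ ((Matrix.isUnit_iff_isUnit_det _).1 (hinv z z.2)), mul_one]
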